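/- Let L be a nonzero lattice (a finitely generated free abelian group with L ≠ {0}) and let L' = l₀ + L₀ ⊆ L be a full affine sublattice, i.e. a coset of a subgroup L₀ ⊆ L of finite index. Then the set of divisibilities div(L') = { div(l) | l ∈ L' } ⊆ ℕ is infinite. -/
import Mathlib


/-- The divisibility of an element `x` of a lattice (finitely generated free abelian
group) `L`: the largest natural number `d` such that `x = d • x₀` for some `x₀ ∈ L`
(and `0` for `x = 0`, since then the set of such `d` is unbounded and `sSup` gives `0`). -/
noncomputable def divis {L : Type*} [AddCommGroup L] (x : L) : ℕ :=
  sSup {d : ℕ | ∃ y : L, x = d • y}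

lemma divis_bddAbove {L : Type*} [AddCommGroup L] [Module.Free ℤ L] [Module.Finite ℤ L]
    {x : L} (hx : x ≠ 0) : BddAbove {d : ℕ | ∃ y : L, x = d • y} := by
  classical
  let b := Module.Free.chooseBasis ℤ L
  have hrepr : b.repr x ≠ 0 := fun h => hx (by simpa using b.repr.injective (by simpa using h))
  obtain ⟨i, hi⟩ : ∃ i, b.repr x i ≠ 0 := by
    by_contra h
    push_neg at h
    exact hrepr (Finsupp.ext h)
  refine ⟨(b.repr x i).natAbs, fun d hd => ?_⟩
  obtain ⟨y, hy⟩ := hd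
  have hdvd : (d : ℤ) ∣ b.repr x i := by
    refine ⟨b.repr y i, ?_⟩
    rw [hy]
    simp [map_nsmul]
  calc d = (d : ℤ).natAbs := by simp
    _ ≤ (b.repr x i).natAbs := Nat.le_of_dvd (Int.natAbs_pos.mpr hi)
        (Int.natAbs_dvd_natAbs.mpr hdvd)

lemma le_divis_smul {L : Type*} [AddCommGroup L] [Module.Free ℤ L] [Module.Finite ℤ L]
    {c : L} (hc : c ≠ 0) {m : ℕ} (hm : 0 < m) : m ≤ divis (m • c) := by
  have hne : m • c ≠ 0 := by
    have : (m : ℤ) • c ≠ 0 := smul_ne_zero (by exact_mod_cast hm.ne') hc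
    simpa using this
  exact le_csSup (divis_bddAbove hne) ⟨c, rfl⟩

/-- If `L ≠ {0}` is a nonzero lattice and `L' = l₀ + L₀ ⊆ L` is a full affine
sublattice (a coset of a finite-index subgroup `L₀ ⊆ L`), then the set of
divisibilities `div(L') = {div l | l ∈ L'}` is infinite. -/
theorem divis_coset_infinite {L : Type*}
    [AddCommGroup L] [Module.Free ℤ L] [Module.Finite ℤ L] [Nontrivial L]
    (L₀ : AddSubgroup L) (hfull : L₀.index ≠ 0) (l₀ : L) :
    {d : ℕ | ∃ y ∈ L₀, d = divis (l₀ + y)}.Infinite := by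
  set n := L₀.index with hn
  have hn1 : 1 ≤ n := Nat.one_le_iff_ne_zero.mpr hfull
  have hmem : ∀ g : L, n • g ∈ L₀ := fun g => AddSubgroup.nsmul_index_mem L₀ g
  -- the set contains arbitrarily large elements
  have key : ∀ N : ℕ, ∃ d ∈ {d : ℕ | ∃ y ∈ L₀, d = divis (l₀ + y)}, N ≤ d := by
    intro N
    by_cases h0 : l₀ = 0
    · obtain ⟨x, hx⟩ := exists_ne (0 : L)
      refine ⟨divis (l₀ + (N + 1) • (n • x)), ⟨(N + 1) • (n • x),
        AddSubgroup.nsmul_mem L₀ (hmem x) _, rfl⟩, ?_⟩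
      have : l₀ + (N + 1) • (n • x) = ((N + 1) * n) • x := by
        rw [h0, zero_add, mul_smul]
      rw [this]
      calc N ≤ (N + 1) * n := le_trans (Nat.le_succ N) (Nat.le_mul_of_pos_right _ hn1)
        _ ≤ divis (((N + 1) * n) • x) := le_divis_smul hx (by positivity)
    · refine ⟨divis (l₀ + (N * n) • l₀), ⟨(N * n) • l₀, ?_, rfl⟩, ?_⟩
      · rw [mul_smul]; exact AddSubgroup.nsmul_mem L₀ (hmem l₀) _
      · have : l₀ + (N * n) • l₀ = (1 + N * n) • l₀ := by
          rw [add_smul, one_smul]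
        rw [this]
        calc N ≤ 1 + N * n := by nlinarith
          _ ≤ divis ((1 + N * n) • l₀) := le_divis_smul h0 (by positivity)
  intro hfin
  obtain ⟨N, hN⟩ := hfin.bddAbove
  obtain ⟨d, hd, hdN⟩ := key (N + 1)
  exact absurd (hN hd) (by omega)
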